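/- Let R be a Γ-graded integral domain and ⋆ a homogeneous star operation on R. Then (e(⋆))_f = (e(⋆_f))_f as classical star operations on R, and (e(⋆))_f is the largest finite-type classical star operation on R extending ⋆_f. -/

import Mathlib

open FractionalIdeal
open scoped Classical

section Setup

variable {Γ : Type*} [AddCommMonoid Γ] [LinearOrder Γ] [IsOrderedCancelAddMonoid Γ] [DecidableEq Γ]
  {R : Type*} [CommRing R] [IsDomain R]
  (𝒜 : Γ → AddSubgroup R) [GradedRing 𝒜]
  (K : Type*) [Field K] [Algebra R K] [IsFractionRing R K]

/-- The integral ideal corresponding to a fractional ideal contained in `R`. -/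
def idealOf (J : FractionalIdeal (nonZeroDivisors R) K) : Ideal R :=
  (J : Submodule R K).comap (Algebra.linearMap R K)

/-- An integral ideal is homogeneous if it contains all homogeneous components of its elements. -/
def IsHomIdeal (I : Ideal R) : Prop := ∀ f ∈ I, ∀ γ : Γ, GradedRing.proj 𝒜 γ f ∈ I

/-- `C(I)`: the homogeneous ideal generated by the homogeneous components of elements of `I`. -/
def homC (I : Ideal R) : Ideal R :=
  Ideal.span {x | ∃ f ∈ I, ∃ γ : Γ, x = GradedRing.proj 𝒜 γ f}

/-- `C(J)` for a fractional ideal `J ⊆ R`, as a fractional ideal. -/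
def Cfrac (J : FractionalIdeal (nonZeroDivisors R) K) : FractionalIdeal (nonZeroDivisors R) K :=
  ↑(homC 𝒜 (idealOf K J))

/-- A fractional ideal is homogeneous if some nonzero homogeneous `s ∈ R` multiplies it into a
homogeneous integral ideal. -/
def IsHomFrac (A : FractionalIdeal (nonZeroDivisors R) K) : Prop :=
  ∃ s : R, s ≠ 0 ∧ SetLike.IsHomogeneousElem 𝒜 s ∧
    spanSingleton (nonZeroDivisors R) (algebraMap R K s) * A ≤ 1 ∧
    IsHomIdeal 𝒜 (idealOf K (spanSingleton (nonZeroDivisors R) (algebraMap R K s) * A))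

/-- A homogeneous element of the homogeneous quotient field, viewed inside `K`. -/
def IsHomElem (x : K) : Prop :=
  ∃ a b : R, SetLike.IsHomogeneousElem 𝒜 a ∧ SetLike.IsHomogeneousElem 𝒜 b ∧ b ≠ 0 ∧
    x * algebraMap R K b = algebraMap R K a

end Setup

/-- A homogeneous star operation on the graded domain `R`. -/
structure HomStarOp {Γ : Type*} [AddCommMonoid Γ] [LinearOrder Γ] [IsOrderedCancelAddMonoid Γ] [DecidableEq Γ]
    {R : Type*} [CommRing R] [IsDomain R] (𝒜 : Γ → AddSubgroup R) [GradedRing 𝒜]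
    (K : Type*) [Field K] [Algebra R K] [IsFractionRing R K] where
  toFun : FractionalIdeal (nonZeroDivisors R) K → FractionalIdeal (nonZeroDivisors R) K
  hom : ∀ A, A ≠ 0 → IsHomFrac 𝒜 K A → IsHomFrac 𝒜 K (toFun A)
  map_span : ∀ x : K, x ≠ 0 → IsHomElem 𝒜 K x →
    toFun (spanSingleton (nonZeroDivisors R) x) = spanSingleton (nonZeroDivisors R) x
  map_smul : ∀ x : K, x ≠ 0 → IsHomElem 𝒜 K x → ∀ A, A ≠ 0 → IsHomFrac 𝒜 K A →
    toFun (spanSingleton (nonZeroDivisors R) x * A) = spanSingleton (nonZeroDivisors R) x * toFun A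
  le_star : ∀ A, A ≠ 0 → IsHomFrac 𝒜 K A → A ≤ toFun A
  mono : ∀ A B, A ≠ 0 → B ≠ 0 → IsHomFrac 𝒜 K A → IsHomFrac 𝒜 K B → A ≤ B → toFun A ≤ toFun B
  idem : ∀ A, A ≠ 0 → IsHomFrac 𝒜 K A → toFun (toFun A) = toFun A

/-- A classical star operation on the domain `R`. -/
structure StarOp (R : Type*) [CommRing R] [IsDomain R]
    (K : Type*) [Field K] [Algebra R K] [IsFractionRing R K] where
  toFun : FractionalIdeal (nonZeroDivisors R) K → FractionalIdeal (nonZeroDivisors R) K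
  map_span : ∀ x : K, x ≠ 0 →
    toFun (spanSingleton (nonZeroDivisors R) x) = spanSingleton (nonZeroDivisors R) x
  map_smul : ∀ x : K, x ≠ 0 → ∀ A, A ≠ 0 →
    toFun (spanSingleton (nonZeroDivisors R) x * A) = spanSingleton (nonZeroDivisors R) x * toFun A
  le_star : ∀ A, A ≠ 0 → A ≤ toFun A
  mono : ∀ A B, A ≠ 0 → B ≠ 0 → A ≤ B → toFun A ≤ toFun B
  idem : ∀ A, A ≠ 0 → toFun (toFun A) = toFun A

section EStar

variable {Γ : Type*} [AddCommMonoid Γ] [LinearOrder Γ] [IsOrderedCancelAddMonoid Γ] [DecidableEq Γ]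
  {R : Type*} [CommRing R] [IsDomain R]
  (𝒜 : Γ → AddSubgroup R) [GradedRing 𝒜]
  (K : Type*) [Field K] [Algebra R K] [IsFractionRing R K]

/-- The submodule `⋂ { z⁻¹ (C(zA))^⋆ : 0 ≠ z ∈ (R : A) }`. -/
def eStarSub (s : HomStarOp 𝒜 K) (A : FractionalIdeal (nonZeroDivisors R) K) : Submodule R K :=
  ⨅ z ∈ {z : K | z ≠ 0 ∧ spanSingleton (nonZeroDivisors R) z * A ≤ 1},
    ↑(spanSingleton (nonZeroDivisors R) z⁻¹ *
      s.toFun (Cfrac 𝒜 K (spanSingleton (nonZeroDivisors R) z * A)))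

/-- The extension `e(⋆)` of a homogeneous star operation `⋆`,
`A^{e(⋆)} := ⋂ { z⁻¹ (C(zA))^⋆ : 0 ≠ z ∈ (R : A) }` (which is a fractional ideal whenever
`A` is a nonzero fractional ideal). -/
noncomputable def eStar (s : HomStarOp 𝒜 K) (A : FractionalIdeal (nonZeroDivisors R) K) :
    FractionalIdeal (nonZeroDivisors R) K :=
  if h : IsFractional (nonZeroDivisors R) (eStarSub 𝒜 K s A) then ⟨_, h⟩ else 0

end EStar


/-- `A^{★_f}` as a set: the union of `B^★` over finitely generated `B ⊆ A`. -/
def finTypeSet {R : Type*} [CommRing R] [IsDomain R]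
    (K : Type*) [Field K] [Algebra R K] [IsFractionRing R K]
    (t : FractionalIdeal (nonZeroDivisors R) K → FractionalIdeal (nonZeroDivisors R) K)
    (A : FractionalIdeal (nonZeroDivisors R) K) : Set K :=
  ⋃ B ∈ {B : FractionalIdeal (nonZeroDivisors R) K |
      B ≠ 0 ∧ B ≤ A ∧ (B : Submodule R K).FG}, {x : K | x ∈ t B}

/-- `A^{⋆_f}` as a set: the union of `B^⋆` over finitely generated homogeneous `B ⊆ A`. -/
def homFinTypeSet {Γ : Type*} [AddCommMonoid Γ] [LinearOrder Γ] [IsOrderedCancelAddMonoid Γ] [DecidableEq Γ]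
    {R : Type*} [CommRing R] [IsDomain R]
    (𝒜 : Γ → AddSubgroup R) [GradedRing 𝒜]
    (K : Type*) [Field K] [Algebra R K] [IsFractionRing R K]
    (t : FractionalIdeal (nonZeroDivisors R) K → FractionalIdeal (nonZeroDivisors R) K)
    (A : FractionalIdeal (nonZeroDivisors R) K) : Set K :=
  ⋃ B ∈ {B : FractionalIdeal (nonZeroDivisors R) K |
      B ≠ 0 ∧ B ≤ A ∧ IsHomFrac 𝒜 K B ∧ (B : Submodule R K).FG}, {x : K | x ∈ t B}


set_option linter.unusedSectionVars false
set_option maxHeartbeats 1000000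

section GradedAux

variable {Γ : Type*} [AddCommMonoid Γ] [LinearOrder Γ] [IsOrderedCancelAddMonoid Γ] [DecidableEq Γ]
  {R : Type*} [CommRing R] [IsDomain R]
  (𝒜 : Γ → AddSubgroup R) [GradedRing 𝒜]

lemma proj_mul_hom_mem (r h : R) {δ : Γ} (hh : h ∈ 𝒜 δ) (γ : Γ) :
    GradedRing.proj 𝒜 γ (r * h) ∈ Ideal.span {h} := by
  classical
  rw [GradedRing.proj_apply, DirectSum.decompose_mul, DirectSum.coe_mul_apply]
  refine Ideal.sum_mem _ ?_
  rintro ⟨i, j⟩ -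
  rcases eq_or_ne j δ with rfl | hj
  · rw [DirectSum.decompose_of_mem_same 𝒜 hh]
    exact Ideal.mul_mem_left _ _ (Ideal.subset_span rfl)
  · rw [DirectSum.decompose_of_mem_ne 𝒜 hh (Ne.symm hj), mul_zero]
    exact zero_mem _

lemma proj_mul_mem (r f : R) (γ : Γ) :
    GradedRing.proj 𝒜 γ (r * f) ∈ Ideal.span {y | ∃ δ : Γ, y = GradedRing.proj 𝒜 δ f} := by
  classical
  have hf : r * f = ∑ δ ∈ DFinsupp.support (DirectSum.decompose 𝒜 f),
      r * (DirectSum.decompose 𝒜 f δ : R) := by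
    rw [← Finset.mul_sum, DirectSum.sum_support_decompose]
  rw [hf, map_sum]
  refine Ideal.sum_mem _ fun δ _ => ?_
  refine Ideal.span_le.mpr ?_ (proj_mul_hom_mem 𝒜 r _ (DirectSum.decompose 𝒜 f δ).2 γ)
  rintro x rfl
  exact Ideal.subset_span ⟨δ, (GradedRing.proj_apply 𝒜 δ f).symm⟩

lemma proj_span_mem {S : Set R} {f : R} (hf : f ∈ Ideal.span S) :
    ∀ γ : Γ,
    GradedRing.proj 𝒜 γ f ∈ Ideal.span {y | ∃ g ∈ S, ∃ δ : Γ, y = GradedRing.proj 𝒜 δ g} := by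
  induction hf using Submodule.span_induction with
  | mem x hx => exact fun γ => Ideal.subset_span ⟨x, hx, γ, rfl⟩
  | zero => intro γ; rw [_root_.map_zero]; exact zero_mem _
  | add x y hx hy ihx ihy => intro γ; rw [_root_.map_add]; exact add_mem (ihx γ) (ihy γ)
  | smul r x hx ih =>
      intro γ
      rw [smul_eq_mul]
      refine Ideal.span_le.mpr ?_ (proj_mul_mem 𝒜 r x γ)
      rintro y ⟨δ, rfl⟩
      exact ih δ

lemma le_homC (I : Ideal R) : I ≤ homC 𝒜 I := by
  intro f hf
  classical
  have hf2 : f = ∑ δ ∈ DFinsupp.support (DirectSum.decompose 𝒜 f),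
      (DirectSum.decompose 𝒜 f δ : R) := (DirectSum.sum_support_decompose 𝒜 f).symm
  rw [hf2]
  refine Ideal.sum_mem _ fun δ _ => Ideal.subset_span ⟨f, hf, δ, (GradedRing.proj_apply 𝒜 δ f).symm⟩

lemma isHomIdeal_homC (I : Ideal R) : IsHomIdeal 𝒜 (homC 𝒜 I) := by
  intro f hf
  induction hf using Submodule.span_induction with
  | mem x hx =>
      obtain ⟨g, hg, δ, rfl⟩ := hx
      intro γ
      rcases eq_or_ne γ δ with rfl | hγ
      · have hm : GradedRing.proj 𝒜 γ g ∈ 𝒜 γ := by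
          rw [GradedRing.proj_apply]; exact SetLike.coe_mem _
        have : GradedRing.proj 𝒜 γ (GradedRing.proj 𝒜 γ g) = GradedRing.proj 𝒜 γ g := by
          rw [GradedRing.proj_apply 𝒜 γ (GradedRing.proj 𝒜 γ g),
            DirectSum.decompose_of_mem_same 𝒜 hm]
        rw [this]
        exact Ideal.subset_span ⟨g, hg, γ, rfl⟩
      · have hm : GradedRing.proj 𝒜 δ g ∈ 𝒜 δ := by
          rw [GradedRing.proj_apply]; exact SetLike.coe_mem _
        have : GradedRing.proj 𝒜 γ (GradedRing.proj 𝒜 δ g) = 0 := by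
          rw [GradedRing.proj_apply 𝒜 γ (GradedRing.proj 𝒜 δ g),
            DirectSum.decompose_of_mem_ne 𝒜 hm (Ne.symm hγ)]
        rw [this]
        exact zero_mem _
  | zero => intro γ; rw [_root_.map_zero]; exact zero_mem _
  | add x y hx hy ihx ihy => intro γ; rw [_root_.map_add]; exact add_mem (ihx γ) (ihy γ)
  | smul r x hx ih =>
      intro γ
      rw [smul_eq_mul]
      refine Ideal.span_le.mpr ?_ (proj_mul_mem 𝒜 r x γ)
      rintro y ⟨δ, rfl⟩
      exact ih δ

lemma homC_fg {I : Ideal R} (h : I.FG) : (homC 𝒜 I).FG := by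
  classical
  obtain ⟨s, rfl⟩ := h
  refine ⟨s.biUnion fun g => (DFinsupp.support (DirectSum.decompose 𝒜 g)).image
    fun δ => GradedRing.proj 𝒜 δ g, ?_⟩
  apply le_antisymm
  · rw [Ideal.span_le]
    intro x hx
    obtain ⟨g, hg, hx⟩ := Finset.mem_biUnion.mp hx
    obtain ⟨δ, _, rfl⟩ := Finset.mem_image.mp hx
    exact Ideal.subset_span ⟨g, Ideal.subset_span hg, δ, rfl⟩
  · rw [homC, Ideal.span_le]
    rintro x ⟨f, hf, γ, rfl⟩
    have := proj_span_mem 𝒜 (S := (↑s : Set R)) hf γ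
    refine Ideal.span_le.mpr ?_ this
    rintro y ⟨g, hg, δ, rfl⟩
    by_cases h0 : GradedRing.proj 𝒜 δ g = 0
    · rw [h0]; exact zero_mem _
    · refine Ideal.subset_span ?_
      refine Finset.mem_biUnion.mpr ⟨g, hg, Finset.mem_image.mpr ⟨δ, ?_, rfl⟩⟩
      exact (GradedRing.mem_support_iff 𝒜 g δ).mpr h0

lemma homC_ne_bot {I : Ideal R} (h : I ≠ ⊥) : homC 𝒜 I ≠ ⊥ :=
  fun hb => h (le_bot_iff.mp (hb ▸ le_homC 𝒜 I))


end GradedAux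

section FracAux

variable {Γ : Type*} [AddCommMonoid Γ] [LinearOrder Γ] [IsOrderedCancelAddMonoid Γ] [DecidableEq Γ]
  {R : Type*} [CommRing R] [IsDomain R]
  (𝒜 : Γ → AddSubgroup R) [GradedRing 𝒜]
  (K : Type*) [Field K] [Algebra R K] [IsFractionRing R K]

lemma mem_idealOf {J : FractionalIdeal (nonZeroDivisors R) K} {r : R} :
    r ∈ idealOf K J ↔ algebraMap R K r ∈ J := Iff.rfl

lemma idealOf_coeIdeal (I : Ideal R) :
    idealOf K (I : FractionalIdeal (nonZeroDivisors R) K) = I := by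
  ext r
  rw [mem_idealOf, mem_coeIdeal]
  constructor
  · rintro ⟨i, hi, h⟩
    exact IsFractionRing.injective R K h ▸ hi
  · exact fun h => ⟨r, h, rfl⟩

lemma coeIdeal_idealOf {J : FractionalIdeal (nonZeroDivisors R) K} (hJ : J ≤ 1) :
    ((idealOf K J : Ideal R) : FractionalIdeal (nonZeroDivisors R) K) = J := by
  ext x
  rw [mem_coeIdeal]
  constructor
  · rintro ⟨r, hr, rfl⟩
    exact mem_idealOf K |>.mp hr
  · intro hx
    obtain ⟨r, rfl⟩ := (mem_one_iff _).mp (hJ hx)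
    exact ⟨r, hx, rfl⟩

lemma idealOf_fg {J : FractionalIdeal (nonZeroDivisors R) K} (hJ : J ≤ 1)
    (h : (J : Submodule R K).FG) : (idealOf K J).FG := by
  apply Submodule.fg_of_fg_map_injective (Algebra.linearMap R K) (IsFractionRing.injective R K)
  rw [show Submodule.map (Algebra.linearMap R K) (idealOf K J)
      = ((↑(idealOf K J) : FractionalIdeal (nonZeroDivisors R) K) : Submodule R K) from rfl,
    coeIdeal_idealOf K hJ]
  exact h

lemma Cfrac_fg {J : FractionalIdeal (nonZeroDivisors R) K} (hJ : J ≤ 1)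
    (h : (J : Submodule R K).FG) : ((Cfrac 𝒜 K J) : Submodule R K).FG := by
  have h1 : (homC 𝒜 (idealOf K J)).FG := homC_fg 𝒜 (idealOf_fg K hJ h)
  rw [Cfrac, show ((↑(homC 𝒜 (idealOf K J)) : FractionalIdeal (nonZeroDivisors R) K)
      : Submodule R K) = Submodule.map (Algebra.linearMap R K) (homC 𝒜 (idealOf K J)) from rfl]
  exact Submodule.FG.map _ h1

lemma le_Cfrac {J : FractionalIdeal (nonZeroDivisors R) K} (hJ : J ≤ 1) : J ≤ Cfrac 𝒜 K J := by
  conv_lhs => rw [← coeIdeal_idealOf K hJ]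
  rw [Cfrac]
  exact (coeIdeal_le_coeIdeal K).mpr (le_homC 𝒜 _)

lemma Cfrac_ne_zero {J : FractionalIdeal (nonZeroDivisors R) K} (hJ : J ≤ 1) (h0 : J ≠ 0) :
    Cfrac 𝒜 K J ≠ 0 := by
  have hI : idealOf K J ≠ ⊥ := by
    intro hb
    apply h0
    rw [← coeIdeal_idealOf K hJ, hb, coeIdeal_bot]
  intro h
  exact homC_ne_bot 𝒜 hI (coeIdeal_eq_zero.mp (by rwa [Cfrac] at h))

lemma isHomFrac_Cfrac (J : FractionalIdeal (nonZeroDivisors R) K) :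
    IsHomFrac 𝒜 K (Cfrac 𝒜 K J) := by
  have h1 : spanSingleton (nonZeroDivisors R) (algebraMap R K (1 : R)) = 1 := by
    rw [_root_.map_one, spanSingleton_one]
  refine ⟨1, one_ne_zero, ⟨0, SetLike.one_mem_graded 𝒜⟩, ?_, ?_⟩
  · rw [h1, one_mul, Cfrac]
    exact coeIdeal_le_one
  · rw [h1, one_mul, Cfrac, idealOf_coeIdeal]
    exact isHomIdeal_homC 𝒜 _

lemma frac_mul_ne_zero {z : K} (hz : z ≠ 0) {B : FractionalIdeal (nonZeroDivisors R) K}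
    (hB : B ≠ 0) : spanSingleton (nonZeroDivisors R) z * B ≠ 0 := by
  obtain ⟨b, hb, hb0⟩ : ∃ b ∈ B, b ≠ 0 := by
    by_contra h
    push_neg at h
    exact hB (eq_zero_iff.mpr h)
  intro h
  have : z * b ∈ (0 : FractionalIdeal (nonZeroDivisors R) K) :=
    h ▸ mul_mem_mul (mem_spanSingleton_self _ z) hb
  exact mul_ne_zero hz hb0 ((mem_zero_iff _).mp this)

lemma exists_z (A : FractionalIdeal (nonZeroDivisors R) K) :
    ∃ z : K, z ≠ 0 ∧ spanSingleton (nonZeroDivisors R) z * A ≤ 1 := by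
  obtain ⟨a, aI, ha, hA⟩ := exists_eq_spanSingleton_mul A
  have hmap : algebraMap R K a ≠ 0 := fun h => ha (IsFractionRing.to_map_eq_zero_iff.mp h)
  refine ⟨algebraMap R K a, hmap, ?_⟩
  rw [hA, ← mul_assoc, spanSingleton_mul_spanSingleton, mul_inv_cancel₀ hmap,
    spanSingleton_one, one_mul]
  exact coeIdeal_le_one

lemma eStarSub_isFractional (s : HomStarOp 𝒜 K) (A : FractionalIdeal (nonZeroDivisors R) K) :
    IsFractional (nonZeroDivisors R) (eStarSub 𝒜 K s A) := by
  obtain ⟨z, hz, hz1⟩ := exists_z K A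
  refine isFractional_of_le (J := spanSingleton (nonZeroDivisors R) z⁻¹ *
    s.toFun (Cfrac 𝒜 K (spanSingleton (nonZeroDivisors R) z * A))) ?_
  exact iInf₂_le z ⟨hz, hz1⟩

lemma mem_eStar {s : HomStarOp 𝒜 K} {A : FractionalIdeal (nonZeroDivisors R) K} {x : K} :
    x ∈ eStar 𝒜 K s A ↔ ∀ z : K, z ≠ 0 → spanSingleton (nonZeroDivisors R) z * A ≤ 1 →
      x ∈ spanSingleton (nonZeroDivisors R) z⁻¹ *
        s.toFun (Cfrac 𝒜 K (spanSingleton (nonZeroDivisors R) z * A)) := by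
  have h1 := eStarSub_isFractional 𝒜 K s A
  have e1 : eStar 𝒜 K s A = ⟨eStarSub 𝒜 K s A, h1⟩ := dif_pos h1
  rw [e1]
  show x ∈ eStarSub 𝒜 K s A ↔ _
  simp only [eStarSub, Submodule.mem_iInf, Set.mem_setOf_eq, mem_coe, and_imp]

lemma eStar_eq_of_sub_eq {s t : HomStarOp 𝒜 K} {A : FractionalIdeal (nonZeroDivisors R) K}
    (h : eStarSub 𝒜 K s A = eStarSub 𝒜 K t A) : eStar 𝒜 K s A = eStar 𝒜 K t A := by
  apply coeToSubmodule_injective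
  have h1 := eStarSub_isFractional 𝒜 K s A
  have h2 := eStarSub_isFractional 𝒜 K t A
  have e1 : eStar 𝒜 K s A = ⟨eStarSub 𝒜 K s A, h1⟩ := dif_pos h1
  have e2 : eStar 𝒜 K t A = ⟨eStarSub 𝒜 K t A, h2⟩ := dif_pos h2
  rw [e1, e2]
  exact h

lemma sf_le_s (s sf : HomStarOp 𝒜 K)
    (hsf : ∀ A : FractionalIdeal (nonZeroDivisors R) K, A ≠ 0 → IsHomFrac 𝒜 K A →
      {x : K | x ∈ sf.toFun A} = homFinTypeSet 𝒜 K s.toFun A)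
    {C : FractionalIdeal (nonZeroDivisors R) K} (hC0 : C ≠ 0) (hCh : IsHomFrac 𝒜 K C) :
    sf.toFun C ≤ s.toFun C := by
  intro x hx
  have hx2 : x ∈ homFinTypeSet 𝒜 K s.toFun C := by
    rw [← hsf C hC0 hCh]
    exact hx
  obtain ⟨B, hB, hxB⟩ := Set.mem_iUnion₂.mp hx2
  exact s.mono B C hB.1 hC0 hB.2.2.1 hCh hB.2.1 hxB

lemma star_eq (s sf : HomStarOp 𝒜 K)
    (hsf : ∀ A : FractionalIdeal (nonZeroDivisors R) K, A ≠ 0 → IsHomFrac 𝒜 K A →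
      {x : K | x ∈ sf.toFun A} = homFinTypeSet 𝒜 K s.toFun A)
    {J : FractionalIdeal (nonZeroDivisors R) K} (hJ1 : J ≤ 1) (hJ0 : J ≠ 0)
    (hfg : (J : Submodule R K).FG) :
    s.toFun (Cfrac 𝒜 K J) = sf.toFun (Cfrac 𝒜 K J) := by
  have hC0 := Cfrac_ne_zero 𝒜 K hJ1 hJ0
  have hCh := isHomFrac_Cfrac 𝒜 K J
  apply le_antisymm
  · intro x hx
    have hx2 : x ∈ homFinTypeSet 𝒜 K s.toFun (Cfrac 𝒜 K J) :=
      Set.mem_iUnion₂.mpr ⟨Cfrac 𝒜 K J, ⟨hC0, le_rfl, hCh, Cfrac_fg 𝒜 K hJ1 hfg⟩, hx⟩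
    rw [← hsf _ hC0 hCh] at hx2
    exact hx2
  · exact sf_le_s 𝒜 K s sf hsf hC0 hCh

lemma eStarSub_eq (s sf : HomStarOp 𝒜 K)
    (hsf : ∀ A : FractionalIdeal (nonZeroDivisors R) K, A ≠ 0 → IsHomFrac 𝒜 K A →
      {x : K | x ∈ sf.toFun A} = homFinTypeSet 𝒜 K s.toFun A)
    {B : FractionalIdeal (nonZeroDivisors R) K} (hB0 : B ≠ 0) (hfg : (B : Submodule R K).FG) :
    eStarSub 𝒜 K s B = eStarSub 𝒜 K sf B := by
  refine iInf_congr fun z => iInf_congr fun hz => ?_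
  obtain ⟨hz0, hz1⟩ := hz
  have hzfg : ((spanSingleton (nonZeroDivisors R) z * B : FractionalIdeal (nonZeroDivisors R) K)
      : Submodule R K).FG := by
    rw [coe_mul, coe_spanSingleton]
    exact Submodule.FG.mul (Submodule.fg_span_singleton z) hfg
  rw [star_eq 𝒜 K s sf hsf hz1 (frac_mul_ne_zero K hz0 hB0) hzfg]

end FracAux

/-- `(e(⋆))_f = (e(⋆_f))_f`, and `(e(⋆))_f` is the largest finite-type classical
star operation extending `⋆_f`. -/
theorem stmt_7
    {Γ : Type*} [AddCommMonoid Γ] [LinearOrder Γ] [IsOrderedCancelAddMonoid Γ] [DecidableEq Γ]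
    {R : Type*} [CommRing R] [IsDomain R]
    (𝒜 : Γ → AddSubgroup R) [GradedRing 𝒜]
    (K : Type*) [Field K] [Algebra R K] [IsFractionRing R K]
    (s sf : HomStarOp 𝒜 K)
    (hsf : ∀ A : FractionalIdeal (nonZeroDivisors R) K, A ≠ 0 → IsHomFrac 𝒜 K A →
      {x : K | x ∈ sf.toFun A} = homFinTypeSet 𝒜 K s.toFun A) :
    (∀ A : FractionalIdeal (nonZeroDivisors R) K, A ≠ 0 →
      finTypeSet K (eStar 𝒜 K s) A = finTypeSet K (eStar 𝒜 K sf) A) ∧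
    (∀ t : StarOp R K,
      (∀ A : FractionalIdeal (nonZeroDivisors R) K, A ≠ 0 →
        {x : K | x ∈ t.toFun A} = finTypeSet K t.toFun A) →
      (∀ A : FractionalIdeal (nonZeroDivisors R) K, A ≠ 0 → IsHomFrac 𝒜 K A →
        t.toFun A = sf.toFun A) →
      (∀ A : FractionalIdeal (nonZeroDivisors R) K, A ≠ 0 →
        {x : K | x ∈ t.toFun A} ⊆ finTypeSet K (eStar 𝒜 K s) A)) := by
  constructor
  · intro A hA
    unfold finTypeSet
    refine Set.iUnion_congr fun B => Set.iUnion_congr fun hB => ?_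
    rw [eStar_eq_of_sub_eq 𝒜 K (eStarSub_eq 𝒜 K s sf hsf hB.1 hB.2.2)]
  · intro t ht hteq A hA x hx
    have hx' : x ∈ finTypeSet K t.toFun A := by
      rw [← ht A hA]
      exact hx
    obtain ⟨B, hB, hxB⟩ := Set.mem_iUnion₂.mp hx'
    obtain ⟨hB0, hBle, hBfg⟩ := hB
    refine Set.mem_iUnion₂.mpr ⟨B, ⟨hB0, hBle, hBfg⟩, ?_⟩
    show x ∈ eStar 𝒜 K s B
    rw [mem_eStar]
    intro z hz0 hz1
    have hzB0 := frac_mul_ne_zero K hz0 hB0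
    have hC0 := Cfrac_ne_zero 𝒜 K hz1 hzB0
    have h1 : z * x ∈ t.toFun (spanSingleton (nonZeroDivisors R) z * B) := by
      rw [t.map_smul z hz0 B hB0]
      exact mul_mem_mul (mem_spanSingleton_self _ z) hxB
    have h2 : z * x ∈ t.toFun (Cfrac 𝒜 K (spanSingleton (nonZeroDivisors R) z * B)) :=
      t.mono _ _ hzB0 hC0 (le_Cfrac 𝒜 K hz1) h1
    rw [hteq _ hC0 (isHomFrac_Cfrac 𝒜 K _)] at h2
    have h3 := sf_le_s 𝒜 K s sf hsf hC0 (isHomFrac_Cfrac 𝒜 K _) h2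
    refine mem_singleton_mul.mpr ⟨z * x, h3, ?_⟩
    rw [← mul_assoc, inv_mul_cancel₀ hz0, one_mul]
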